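/- Let ω be a nonzero alternating bilinear form on euclidean ℝ⁴ satisfying the self-duality relations ω(e₀,e₁)=ω(e₂,e₃), ω(e₀,e₂)=ω(e₃,e₁), ω(e₀,e₃)=ω(e₁,e₂), and set λ = √(ω(e₀,e₁)² + ω(e₀,e₂)² + ω(e₀,e₃)²) > 0. Then there exists a unique linear map J : ℝ⁴ → ℝ⁴ such that ω(Jx, y) = λ·⟨x,y⟩ for all x, y ∈ ℝ⁴; moreover this J satisfies J∘J = −id (J is an almost complex structure) and ⟨Jx, Jy⟩ = ⟨x, y⟩ for all x, y (J is orthogonal). In other words, there is a unique almost complex structure on ℝ⁴ compatible with ω and the conformally rescaled metric λ·⟨·,·⟩. -/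

import Mathlib

set_option maxHeartbeats 1000000
noncomputable section

/-- The standard orthonormal basis e₀,e₁,e₂,e₃ of euclidean ℝ⁴. -/
def E (i : Fin 4) : EuclideanSpace ℝ (Fin 4) := EuclideanSpace.single i 1

/-- For a nonzero self-dual alternating bilinear form ω on euclidean ℝ⁴, with
λ = √(ω(e₀,e₁)² + ω(e₀,e₂)² + ω(e₀,e₃)²), we have λ > 0, there is a unique linear map
J with ω(Jx,y) = λ⟨x,y⟩, and any such J satisfies J² = −id and is orthogonal: J is
the unique almost complex structure compatible with ω and the metric λ⟨·,·⟩. -/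
theorem unique_compatible_acs
    (ω : EuclideanSpace ℝ (Fin 4) →ₗ[ℝ] EuclideanSpace ℝ (Fin 4) →ₗ[ℝ] ℝ)
    (halt : ∀ x, ω x x = 0)
    (hne : ω ≠ 0)
    (hsd : ω (E 0) (E 1) = ω (E 2) (E 3) ∧
           ω (E 0) (E 2) = ω (E 3) (E 1) ∧
           ω (E 0) (E 3) = ω (E 1) (E 2))
    (lam : ℝ)
    (hlam : lam = Real.sqrt
      (ω (E 0) (E 1) ^ 2 + ω (E 0) (E 2) ^ 2 + ω (E 0) (E 3) ^ 2)) :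
    0 < lam ∧
    (∃! J : EuclideanSpace ℝ (Fin 4) →ₗ[ℝ] EuclideanSpace ℝ (Fin 4),
      ∀ x y, ω (J x) y = lam * (inner ℝ x y : ℝ)) ∧
    (∀ J : EuclideanSpace ℝ (Fin 4) →ₗ[ℝ] EuclideanSpace ℝ (Fin 4),
      (∀ x y, ω (J x) y = lam * (inner ℝ x y : ℝ)) →
      (∀ x, J (J x) = -x) ∧ (∀ x y, (inner ℝ (J x) (J y) : ℝ) = inner ℝ x y)) := by
  set a := ω (E 0) (E 1) with ha
  set b := ω (E 0) (E 2) with hb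
  set c := ω (E 0) (E 3) with hc
  -- basic facts
  have hrep : ∀ x : EuclideanSpace ℝ (Fin 4), x = ∑ i, x i • E i := fun x => by
    simpa [E, EuclideanSpace.basisFun_apply] using
      ((EuclideanSpace.basisFun (Fin 4) ℝ).sum_repr x).symm
  have hanti : ∀ x y, ω y x = -ω x y := by
    intro x y
    have h := halt (x + y)
    simp only [map_add, LinearMap.add_apply, halt] at h
    linarith
  have hE : ∀ i j : Fin 4, E i j = if i = j then 1 else 0 := by
    intro i j; simp [E, EuclideanSpace.single_apply, eq_comm]
  have h23 : ω (E 2) (E 3) = a := hsd.1.symm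
  have h31 : ω (E 3) (E 1) = b := hsd.2.1.symm
  have h12 : ω (E 1) (E 2) = c := hsd.2.2.symm
  have h10 : ω (E 1) (E 0) = -a := hanti _ _
  have h20 : ω (E 2) (E 0) = -b := hanti _ _
  have h30 : ω (E 3) (E 0) = -c := hanti _ _
  have h32 : ω (E 3) (E 2) = -a := by rw [hanti, h23]
  have h13 : ω (E 1) (E 3) = -b := by rw [hanti, h31]
  have h21 : ω (E 2) (E 1) = -c := by rw [hanti, h12]
  have homega : ∀ x y, ω x y = a*(x 0*y 1 - x 1*y 0 + x 2*y 3 - x 3*y 2)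
      + b*(x 0*y 2 - x 2*y 0 + x 3*y 1 - x 1*y 3)
      + c*(x 0*y 3 - x 3*y 0 + x 1*y 2 - x 2*y 1) := by
    intro x y
    conv_lhs => rw [hrep x, hrep y]
    simp only [map_sum, map_add, LinearMap.add_apply, map_smul, LinearMap.sum_apply,
      LinearMap.smul_apply, smul_eq_mul, Fin.sum_univ_four]
    rw [halt, halt, halt, halt, h23, h31, h12, h10, h20, h30, h32, h13, h21]
    ring
  have hinner : ∀ x y : EuclideanSpace ℝ (Fin 4),
      (inner ℝ x y : ℝ) = x 0*y 0 + x 1*y 1 + x 2*y 2 + x 3*y 3 := by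
    intro x y; simp [PiLp.inner_apply, Fin.sum_univ_four, mul_comm]
  have hinnerE : ∀ (x : EuclideanSpace ℝ (Fin 4)) (j : Fin 4), (inner ℝ x (E j) : ℝ) = x j := by
    intro x j; simp [E, PiLp.inner_apply, EuclideanSpace.single_apply]
  -- positivity of lam
  have habc : 0 < a^2 + b^2 + c^2 := by
    rcases lt_or_eq_of_le (by positivity : (0:ℝ) ≤ a^2 + b^2 + c^2) with h | h
    · exact h
    · exfalso
      have ha0 : a = 0 := by
        have h1 : a^2 ≤ 0 := by linarith [sq_nonneg b, sq_nonneg c]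
        exact sq_eq_zero_iff.mp (le_antisymm h1 (sq_nonneg a))
      have hb0 : b = 0 := by
        have h1 : b^2 ≤ 0 := by linarith [sq_nonneg a, sq_nonneg c]
        exact sq_eq_zero_iff.mp (le_antisymm h1 (sq_nonneg b))
      have hc0 : c = 0 := by
        have h1 : c^2 ≤ 0 := by linarith [sq_nonneg a, sq_nonneg b]
        exact sq_eq_zero_iff.mp (le_antisymm h1 (sq_nonneg c))
      apply hne
      refine LinearMap.ext fun x => LinearMap.ext fun y => ?_
      rw [homega, ha0, hb0, hc0]
      simp
  have hlampos : 0 < lam := by rw [hlam]; exact Real.sqrt_pos.mpr habc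
  have hlamne : lam ≠ 0 := ne_of_gt hlampos
  have hlamsq : lam * lam = a^2 + b^2 + c^2 := by
    rw [hlam]; exact Real.mul_self_sqrt (le_of_lt habc)
  -- the key component computation
  have hcomp : ∀ u x : EuclideanSpace ℝ (Fin 4),
      (∀ y, ω u y = lam * (inner ℝ x y : ℝ)) →
      lam * u 0 = a*x 1 + b*x 2 + c*x 3 ∧
      lam * u 1 = -a*x 0 + c*x 2 - b*x 3 ∧
      lam * u 2 = -b*x 0 - c*x 1 + a*x 3 ∧
      lam * u 3 = -c*x 0 + b*x 1 - a*x 2 := by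
    intro u x h
    have e0 := h (E 0); have e1 := h (E 1); have e2 := h (E 2); have e3 := h (E 3)
    rw [homega, hinnerE] at e0 e1 e2 e3
    simp [hE] at e0 e1 e2 e3
    refine ⟨?_, ?_, ?_, ?_⟩
    · exact mul_left_cancel₀ hlamne (by linear_combination a*e1 + b*e2 + c*e3 + u 0 * hlamsq)
    · exact mul_left_cancel₀ hlamne (by linear_combination -a*e0 + c*e2 - b*e3 + u 1 * hlamsq)
    · exact mul_left_cancel₀ hlamne (by linear_combination -b*e0 - c*e1 + a*e3 + u 2 * hlamsq)
    · exact mul_left_cancel₀ hlamne (by linear_combination -c*e0 + b*e1 - a*e2 + u 3 * hlamsq)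
  -- the candidate J
  let J : EuclideanSpace ℝ (Fin 4) →ₗ[ℝ] EuclideanSpace ℝ (Fin 4) :=
  { toFun := fun x => (WithLp.equiv 2 (Fin 4 → ℝ)).symm
      ![lam⁻¹*(a*x 1+b*x 2+c*x 3), lam⁻¹*(-a*x 0+c*x 2-b*x 3),
        lam⁻¹*(-b*x 0-c*x 1+a*x 3), lam⁻¹*(-c*x 0+b*x 1-a*x 2)]
    map_add' := by
      intro x y; ext i; fin_cases i <;>
        simp [WithLp.equiv_symm_apply] <;> ring
    map_smul' := by
      intro m x; ext i; fin_cases i <;>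
        simp [WithLp.equiv_symm_apply] <;> ring }
  have hJ0 : ∀ x : EuclideanSpace ℝ (Fin 4), J x 0 = lam⁻¹*(a*x 1+b*x 2+c*x 3) := fun x => rfl
  have hJ1 : ∀ x : EuclideanSpace ℝ (Fin 4), J x 1 = lam⁻¹*(-a*x 0+c*x 2-b*x 3) := fun x => rfl
  have hJ2 : ∀ x : EuclideanSpace ℝ (Fin 4), J x 2 = lam⁻¹*(-b*x 0-c*x 1+a*x 3) := fun x => rfl
  have hJ3 : ∀ x : EuclideanSpace ℝ (Fin 4), J x 3 = lam⁻¹*(-c*x 0+b*x 1-a*x 2) := fun x => rfl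
  have hJprop : ∀ x y, ω (J x) y = lam * (inner ℝ x y : ℝ) := by
    intro x y
    rw [homega, hinner, hJ0, hJ1, hJ2, hJ3]
    field_simp
    linear_combination -(x 0*y 0 + x 1*y 1 + x 2*y 2 + x 3*y 3) * hlamsq
  refine ⟨hlampos, ⟨J, hJprop, ?_⟩, ?_⟩
  · -- uniqueness
    intro J' hJ'
    apply LinearMap.ext
    intro x
    obtain ⟨c0, c1, c2, c3⟩ := hcomp (J' x) x (hJ' x)
    obtain ⟨d0, d1, d2, d3⟩ := hcomp (J x) x (hJprop x)
    have q0 : J' x 0 = J x 0 := mul_left_cancel₀ hlamne (c0.trans d0.symm)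
    have q1 : J' x 1 = J x 1 := mul_left_cancel₀ hlamne (c1.trans d1.symm)
    have q2 : J' x 2 = J x 2 := mul_left_cancel₀ hlamne (c2.trans d2.symm)
    have q3 : J' x 3 = J x 3 := mul_left_cancel₀ hlamne (c3.trans d3.symm)
    ext i
    fin_cases i
    exacts [q0, q1, q2, q3]
  · -- every compatible J is an orthogonal complex structure
    intro K hK
    have hc := fun x => hcomp (K x) x (hK x)
    constructor
    · intro x
      have r0 : K (K x) 0 = -(x 0) := by
        refine mul_left_cancel₀ hlamne (mul_left_cancel₀ hlamne ?_)
        linear_combination lam*(hc (K x)).1 + a*(hc x).2.1 + b*(hc x).2.2.1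
          + c*(hc x).2.2.2 + x 0 * hlamsq
      have r1 : K (K x) 1 = -(x 1) := by
        refine mul_left_cancel₀ hlamne (mul_left_cancel₀ hlamne ?_)
        linear_combination lam*(hc (K x)).2.1 - a*(hc x).1 + c*(hc x).2.2.1
          - b*(hc x).2.2.2 + x 1 * hlamsq
      have r2 : K (K x) 2 = -(x 2) := by
        refine mul_left_cancel₀ hlamne (mul_left_cancel₀ hlamne ?_)
        linear_combination lam*(hc (K x)).2.2.1 - b*(hc x).1 - c*(hc x).2.1
          + a*(hc x).2.2.2 + x 2 * hlamsq
      have r3 : K (K x) 3 = -(x 3) := by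
        refine mul_left_cancel₀ hlamne (mul_left_cancel₀ hlamne ?_)
        linear_combination lam*(hc (K x)).2.2.2 - c*(hc x).1 + b*(hc x).2.1
          - a*(hc x).2.2.1 + x 3 * hlamsq
      ext i
      fin_cases i
      exacts [r0, r1, r2, r3]
    · intro x y
      rw [hinner, hinner]
      refine mul_left_cancel₀ hlamne (mul_left_cancel₀ hlamne ?_)
      obtain ⟨c0, c1, c2, c3⟩ := hc x
      obtain ⟨d0, d1, d2, d3⟩ := hc y
      linear_combination (lam * K y 0) * c0 + (a*x 1 + b*x 2 + c*x 3) * d0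
        + (lam * K y 1) * c1 + (-a*x 0 + c*x 2 - b*x 3) * d1
        + (lam * K y 2) * c2 + (-b*x 0 - c*x 1 + a*x 3) * d2
        + (lam * K y 3) * c3 + (-c*x 0 + b*x 1 - a*x 2) * d3
        - (x 0*y 0 + x 1*y 1 + x 2*y 2 + x 3*y 3) * hlamsq
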